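/- (Good approximations to A yield singular subspaces) Let s < n, A' ∈ M_{s,n−s}(ℝ), a₀ ∈ ℝ^{n−s}, and set A = (a₀; A') ∈ M_{s+1,n−s}(ℝ). Parametrize the affine subspace L ⊂ ℝ^n by x ↦ (x, x A' + a₀) for x ∈ ℝ^s. If A is φ-singular (as an (s+1)×(n−s) system of linear forms), then every point of L is φ-singular (as a 1×n system of linear forms, i.e. a row vector in ℝ^n). -/

import Mathlib

open Matrix

/-- `Y ∈ M_{m,n}(ℝ)` is `φ`-singular. -/
def MatSingular (m n : ℕ) (φ : ℝ → ℝ) (Y : Matrix (Fin m) (Fin n) ℝ) : Prop :=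
  ∀ c > (0 : ℝ), ∃ N₀ : ℝ, ∀ N ≥ N₀, ∃ q : Fin n → ℤ, q ≠ 0 ∧
    (∃ p : Fin m → ℤ,
      ‖Y.mulVec (fun j => (q j : ℝ)) - fun i => (p i : ℝ)‖ < c * φ N / N ^ ((m : ℝ) / n)) ∧
    ‖((fun j => (q j : ℝ)) : Fin n → ℝ)‖ < c * N

/-- A row vector `y ∈ ℝ^n`, viewed as a `1 × n` system of linear forms, is `φ`-singular. -/
def VecSingular (n : ℕ) (φ : ℝ → ℝ) (y : Fin n → ℝ) : Prop :=
  ∀ c > (0 : ℝ), ∃ N₀ : ℝ, ∀ N ≥ N₀, ∃ q : Fin n → ℤ, q ≠ 0 ∧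
    (∃ p : ℤ, |(∑ j, y j * q j) - p| < c * φ N / N ^ ((1 : ℝ) / n)) ∧
    ‖((fun j => (q j : ℝ)) : Fin n → ℝ)‖ < c * N

lemma dot_abs_le (n : ℕ) (u e : Fin n → ℝ) : |u ⬝ᵥ e| ≤ n * ‖u‖ * ‖e‖ := by
  refine le_trans (Finset.abs_sum_le_sum_abs _ _) ?_
  have h : ∀ i, |u i * e i| ≤ ‖u‖ * ‖e‖ := fun i => by
    rw [abs_mul]
    exact mul_le_mul (by simpa using norm_le_pi_norm u i) (by simpa using norm_le_pi_norm e i)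
      (abs_nonneg _) (norm_nonneg _)
  refine le_trans (Finset.sum_le_sum fun i _ => h i) ?_
  simp [Finset.card_univ, mul_assoc]

lemma mulVec_abs_le {m n : ℕ} (A : Matrix (Fin m) (Fin n) ℝ) (w : Fin n → ℝ) (i : Fin m) :
    |(A.mulVec w) i| ≤ (∑ i, ∑ j, |A i j|) * ‖w‖ := by
  have hvi : A.mulVec w i = ∑ j, A i j * w j := rfl
  rw [hvi]
  refine le_trans (Finset.abs_sum_le_sum_abs _ _) ?_
  have h : ∀ j, |A i j * w j| ≤ |A i j| * ‖w‖ := fun j => by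
    rw [abs_mul]
    exact mul_le_mul_of_nonneg_left (by simpa using norm_le_pi_norm w j) (abs_nonneg _)
  refine le_trans (Finset.sum_le_sum fun j _ => h j) ?_
  rw [← Finset.sum_mul]
  refine mul_le_mul_of_nonneg_right ?_ (norm_nonneg _)
  exact Finset.single_le_sum (f := fun i => ∑ j, |A i j|) (fun i _ => by positivity)
    (Finset.mem_univ i)


lemma normQ (s r : ℕ) (p : Fin (s+1) → ℤ) (q : Fin r → ℤ) (hr : 0 < r) (R : ℝ) (hR : 0 < R)
    (hbp : ∀ i, |((p i : ℤ) : ℝ)| < R) (hbq : ∀ j, |((q j : ℤ) : ℝ)| < R) :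
    ‖(fun j => ((Fin.append (fun i : Fin s => -(p i.succ)) q j : ℤ) : ℝ) : Fin (s+r) → ℝ)‖
      < R := by
  haveI : NeZero (s + r) := ⟨by omega⟩
  rw [pi_norm_lt_iff hR]
  intro i
  induction i using Fin.addCases with
  | left i' =>
    simp only [Fin.append_left, Real.norm_eq_abs, Int.cast_neg, abs_neg]
    exact hbp i'.succ
  | right j' =>
    simp only [Fin.append_right, Real.norm_eq_abs]
    exact hbq j'


lemma key_sum (s r : ℕ) (x : Fin s → ℝ) (A : Matrix (Fin (s + 1)) (Fin r) ℝ)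
    (p : Fin (s + 1) → ℤ) (q : Fin r → ℤ) :
    (∑ j, (Fin.append x ((Fin.cons 1 x) ᵥ* A)) j
        * ((Fin.append (fun i : Fin s => -(p i.succ)) q) j : ℝ)) - (p 0 : ℝ)
      = (Fin.cons (1:ℝ) x) ⬝ᵥ (A.mulVec (fun j => (q j : ℝ)) - fun i => (p i : ℝ)) := by
  rw [Fin.sum_univ_add]
  simp only [Fin.append_left, Fin.append_right]
  have hdp : ∑ j : Fin r, ((Fin.cons (1:ℝ) x) ᵥ* A) j * (q j : ℝ)
      = (Fin.cons (1:ℝ) x) ⬝ᵥ (A.mulVec (fun j => (q j : ℝ))) := by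
    have h := dotProduct_mulVec (Fin.cons (1:ℝ) x) A (fun j => (q j : ℝ))
    simpa [dotProduct] using h.symm
  rw [hdp]
  simp only [dotProduct, Pi.sub_apply]
  rw [Fin.sum_univ_succ, Fin.sum_univ_succ]
  simp only [Fin.cons_zero, Fin.cons_succ, mul_sub, Finset.sum_sub_distrib, neg_mul, mul_neg]
  push_cast
  have hneg : ∑ i : Fin s, x i * -((p i.succ : ℤ) : ℝ)
      = -∑ i : Fin s, x i * ((p i.succ : ℤ) : ℝ) := by simp
  rw [hneg]
  ring

set_option maxHeartbeats 2000000 in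
theorem subspace_singular_of_matrix_singular (s r : ℕ) (hr : 0 < r)
    (φ : ℝ → ℝ) (hφa : AntitoneOn φ (Set.Ioi 0)) (hφc : ContinuousOn φ (Set.Ioi 0))
    (hφp : ∀ x > (0 : ℝ), 0 < φ x)
    (A : Matrix (Fin (s + 1)) (Fin r) ℝ)
    (hA : MatSingular (s + 1) r φ A) :
    ∀ x : Fin s → ℝ,
      VecSingular (s + r) φ (Fin.append x ((Fin.cons 1 x) ᵥ* A)) := by
  intro x c hc
  have hr' : (0:ℝ) < r := by exact_mod_cast hr
  have hs0 : (0:ℝ) ≤ s := Nat.cast_nonneg s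
  have hB1 : (1:ℝ) ≤ ‖(Fin.cons 1 x : Fin (s+1) → ℝ)‖ := by
    simpa using norm_le_pi_norm (Fin.cons 1 x : Fin (s+1) → ℝ) 0
  set B : ℝ := ‖(Fin.cons 1 x : Fin (s+1) → ℝ)‖ with hBdef
  set C0 : ℝ := ∑ i, ∑ j, |A i j| with hC0def
  have hC0 : 0 ≤ C0 := by rw [hC0def]; positivity
  have hφ1 : 0 < φ 1 := hφp 1 one_pos
  set K : ℝ := ((s:ℝ) + 1) * B + φ 1 + C0 + 1 with hKdef
  have hK1 : 1 < K := by nlinarith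
  have hK : 0 < K := by linarith
  set c' : ℝ := c / K with hc'def
  have hc' : 0 < c' := div_pos hc hK
  clear_value B C0 K c'
  obtain ⟨N₀, hN₀⟩ := hA c' hc'
  refine ⟨max N₀ 1, fun N hN => ?_⟩
  have hN1 : (1 : ℝ) ≤ N := le_trans (le_max_right _ _) hN
  have hNpos : (0 : ℝ) < N := lt_of_lt_of_le one_pos hN1
  have hφN : 0 < φ N := hφp N hNpos
  have hφN1 : φ N ≤ φ 1 := hφa (Set.mem_Ioi.2 one_pos) (Set.mem_Ioi.2 hNpos) hN1
  obtain ⟨q, hq0, ⟨p, hp⟩, hqn⟩ := hN₀ N (le_trans (le_max_left _ _) hN)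
  -- exponent facts
  have hre : N ^ ((1 : ℝ) / ((s + r : ℕ) : ℝ)) ≤ N ^ (((s + 1 : ℕ) : ℝ) / (r : ℝ)) := by
    apply Real.rpow_le_rpow_of_exponent_le hN1
    rw [div_le_div_iff₀ (by push_cast; linarith) hr']
    push_cast
    nlinarith
  have hrp1 : (0:ℝ) < N ^ ((1 : ℝ) / ((s + r : ℕ) : ℝ)) := Real.rpow_pos_of_pos hNpos _
  have hrp1' : (0:ℝ) < N ^ (((s + 1 : ℕ) : ℝ) / (r : ℝ)) := Real.rpow_pos_of_pos hNpos _
  have hrp2 : (1:ℝ) ≤ N ^ (((s + 1 : ℕ) : ℝ) / (r : ℝ)) := by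
    calc (1:ℝ) = N ^ (0:ℝ) := (Real.rpow_zero N).symm
    _ ≤ N ^ (((s + 1 : ℕ) : ℝ) / (r : ℝ)) :=
      Real.rpow_le_rpow_of_exponent_le hN1 (by positivity)
  -- error vector
  set e : Fin (s+1) → ℝ := A.mulVec (fun j => ((q j : ℤ) : ℝ)) - fun i => ((p i : ℤ) : ℝ)
    with hedef
  have hErr : ‖e‖ < c' * φ N / N ^ (((s + 1 : ℕ) : ℝ) / (r : ℝ)) := hp
  clear_value e
  have hErr1 : ‖e‖ < c' * φ 1 := by
    refine lt_of_lt_of_le hErr ?_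
    rw [div_le_iff₀ (by linarith)]
    have h1 : c' * φ N ≤ c' * φ 1 := mul_le_mul_of_nonneg_left hφN1 hc'.le
    have h2 : (c' * φ 1) * 1 ≤ (c' * φ 1) * N ^ (((s + 1 : ℕ) : ℝ) / (r : ℝ)) :=
      mul_le_mul_of_nonneg_left hrp2 (mul_nonneg hc'.le hφ1.le)
    linarith
  have hec : ∀ i, |e i| ≤ ‖e‖ := fun i => by simpa using norm_le_pi_norm e i
  have hqc : ∀ j, |((q j : ℤ) : ℝ)| ≤ ‖(fun j => ((q j : ℤ) : ℝ))‖ :=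
    fun j => by simpa using norm_le_pi_norm (fun j => ((q j : ℤ) : ℝ)) j
  -- bound on components of p
  have hpb : ∀ i, |((p i : ℤ) : ℝ)| < c' * (φ 1 + C0) * N := by
    intro i
    have hpe : ((p i : ℤ) : ℝ) = (A.mulVec (fun j => ((q j : ℤ) : ℝ))) i - e i := by
      rw [hedef]; simp
    have h1 : |((p i : ℤ) : ℝ)| ≤ |(A.mulVec (fun j => ((q j : ℤ) : ℝ))) i| + |e i| := by
      rw [hpe]; exact abs_sub _ _
    have h2 : |(A.mulVec (fun j => ((q j : ℤ) : ℝ))) i| ≤ C0 * ‖(fun j => ((q j : ℤ) : ℝ))‖ := by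
      rw [hC0def]; exact mulVec_abs_le A _ i
    have h3 : |e i| < c' * φ 1 := lt_of_le_of_lt (hec i) hErr1
    have h4 : C0 * ‖(fun j => ((q j : ℤ) : ℝ))‖ ≤ C0 * (c' * N) :=
      mul_le_mul_of_nonneg_left hqn.le hC0
    have h5 : c' * φ 1 * 1 ≤ c' * φ 1 * N :=
      mul_le_mul_of_nonneg_left hN1 (mul_nonneg hc'.le hφ1.le)
    have h6 : |((p i : ℤ) : ℝ)| < C0 * (c' * N) + c' * φ 1 := by linarith
    have h7 : C0 * (c' * N) + c' * φ 1 ≤ c' * (φ 1 + C0) * N := by nlinarith [h5]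
    linarith
  -- build Q and P
  refine ⟨Fin.append (fun i : Fin s => -(p i.succ)) q, ?_, ⟨p 0, ?_⟩, ?_⟩
  · intro h
    obtain ⟨j, hj⟩ : ∃ j, q j ≠ 0 := Function.ne_iff.1 hq0
    apply hj
    have := congrFun h (Fin.natAdd s j)
    simpa [Fin.append_right] using this
  · -- main estimate
    rw [key_sum s r x A p q, ← hedef]
    have h1 : |(Fin.cons (1:ℝ) x) ⬝ᵥ e| ≤ ((s+1 : ℕ) : ℝ) * B * ‖e‖ := by
      rw [hBdef]; exact dot_abs_le (s+1) _ e
    have hs1B : (0:ℝ) < ((s+1 : ℕ) : ℝ) * B :=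
      mul_pos (by positivity) (lt_of_lt_of_le one_pos hB1)
    have h3 : |(Fin.cons (1:ℝ) x) ⬝ᵥ e|
        < ((s+1 : ℕ) : ℝ) * B * (c' * φ N / N ^ (((s + 1 : ℕ) : ℝ) / (r : ℝ))) :=
      lt_of_le_of_lt h1 (mul_lt_mul_of_pos_left hErr hs1B)
    refine lt_of_lt_of_le h3 ?_
    have hd : c' * φ N / N ^ (((s + 1 : ℕ) : ℝ) / (r : ℝ))
        ≤ c' * φ N / N ^ ((1 : ℝ) / ((s + r : ℕ) : ℝ)) :=
      div_le_div_of_nonneg_left (mul_nonneg hc'.le hφN.le) hrp1 hre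
    have hc'K : ((s+1 : ℕ) : ℝ) * B * c' ≤ c := by
      have hKB : ((s+1 : ℕ) : ℝ) * B ≤ K := by push_cast; linarith
      calc ((s+1 : ℕ) : ℝ) * B * c' = (((s+1 : ℕ) : ℝ) * B / K) * c := by
            rw [hc'def]; ring
      _ ≤ 1 * c := mul_le_mul_of_nonneg_right ((div_le_one hK).2 hKB) hc.le
      _ = c := one_mul c
    calc ((s+1 : ℕ) : ℝ) * B * (c' * φ N / N ^ (((s + 1 : ℕ) : ℝ) / (r : ℝ)))
        ≤ ((s+1 : ℕ) : ℝ) * B * (c' * φ N / N ^ ((1 : ℝ) / ((s + r : ℕ) : ℝ))) :=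
          mul_le_mul_of_nonneg_left hd hs1B.le
    _ = (((s+1 : ℕ) : ℝ) * B * c') * (φ N / N ^ ((1 : ℝ) / ((s + r : ℕ) : ℝ))) := by ring
    _ ≤ c * (φ N / N ^ ((1 : ℝ) / ((s + r : ℕ) : ℝ))) :=
          mul_le_mul_of_nonneg_right hc'K (div_nonneg hφN.le hrp1.le)
    _ = c * φ N / N ^ ((1 : ℝ) / ((s + r : ℕ) : ℝ)) := by ring
  · -- norm bound on Q
    have hle1 : c' * (φ 1 + C0) ≤ c := by
      have h1 : φ 1 + C0 ≤ K := by
        nlinarith [mul_pos (show (0:ℝ) < (s:ℝ)+1 by linarith) (lt_of_lt_of_le one_pos hB1)]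
      calc c' * (φ 1 + C0) = ((φ 1 + C0) / K) * c := by rw [hc'def]; ring
      _ ≤ 1 * c := mul_le_mul_of_nonneg_right ((div_le_one hK).2 h1) hc.le
      _ = c := one_mul c
    have hle2 : c' ≤ c := by
      rw [hc'def, div_le_iff₀ hK]
      nlinarith [mul_pos (show (0:ℝ) < (s:ℝ)+1 by linarith) (lt_of_lt_of_le one_pos hB1)]
    refine normQ s r p q hr (c * N) (mul_pos hc hNpos) (fun i => ?_) (fun j => ?_)
    · exact lt_of_lt_of_le (hpb i) (mul_le_mul_of_nonneg_right hle1 hNpos.le)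
    · exact lt_of_le_of_lt (hqc j)
        (lt_of_lt_of_le hqn (mul_le_mul_of_nonneg_right hle2 hNpos.le))
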